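/- arXiv:2105.06644 — 13 statements merged into one kernel-verified Lean document; each statement's English description precedes it below -/
import Mathlib

section
/- If X is a strongly star-Lindelöf topological space of cardinality less than the dominating number 𝔡, then X is strongly star-Menger. -/
open Set Filter

variable {X : Type u}

def star {X : Type u} (A : Set X) (U : Set (Set X)) : Set X :=
  ⋃₀ {u ∈ U | (u ∩ A).Nonempty}

def IsOpenCover {X : Type u} [TopologicalSpace X] (U : Set (Set X)) : Prop :=
  (∀ u ∈ U, IsOpen u) ∧ ⋃₀ U = univ

noncomputable def domNum : Cardinal :=
  sInf {c | ∃ D : Set (ℕ → ℕ), Cardinal.mk D = c ∧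
    ∀ f : ℕ → ℕ, ∃ g ∈ D, ∀ᶠ n in atTop, f n ≤ g n}

noncomputable def boundNum : Cardinal :=
  sInf {c | ∃ B : Set (ℕ → ℕ), Cardinal.mk B = c ∧
    ¬ ∃ g : ℕ → ℕ, ∀ f ∈ B, ∀ᶠ n in atTop, f n ≤ g n}

noncomputable def covMeager : Cardinal :=
  sInf {c | ∃ F : Set (ℕ → ℕ), Cardinal.mk F = c ∧
    ¬ ∃ g : ℕ → ℕ, ∀ f ∈ F, {n | g n = f n}.Infinite}

def StronglyStarLindelof (X : Type u) [TopologicalSpace X] : Prop :=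
  ∀ U : Set (Set X), IsOpenCover U →
    ∃ C : Set X, C.Countable ∧ star C U = univ

def AbsStronglyStarLindelof (X : Type u) [TopologicalSpace X] : Prop :=
  ∀ U : Set (Set X), IsOpenCover U → ∀ D : Set X, Dense D →
    ∃ C : Set X, C ⊆ D ∧ C.Countable ∧ star C U = univ

def StronglyStarMenger (X : Type u) [TopologicalSpace X] : Prop :=
  ∀ U : ℕ → Set (Set X), (∀ n, IsOpenCover (U n)) →
    ∃ F : ℕ → Finset X, ⋃ n, star (↑(F n)) (U n) = univ

def AbsStronglyStarMenger (X : Type u) [TopologicalSpace X] : Prop :=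
  ∀ U : ℕ → Set (Set X), (∀ n, IsOpenCover (U n)) → ∀ D : Set X, Dense D →
    ∃ F : ℕ → Finset X, (∀ n, ↑(F n) ⊆ D) ∧ ⋃ n, star (↑(F n)) (U n) = univ

def SelStronglyStarMenger (X : Type u) [TopologicalSpace X] : Prop :=
  ∀ U : ℕ → Set (Set X), (∀ n, IsOpenCover (U n)) →
    ∀ D : ℕ → Set X, (∀ n, Dense (D n)) →
      ∃ F : ℕ → Finset X, (∀ n, ↑(F n) ⊆ D n) ∧ ⋃ n, star (↑(F n)) (U n) = univ

def StronglyStarHurewicz (X : Type u) [TopologicalSpace X] : Prop :=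
  ∀ U : ℕ → Set (Set X), (∀ n, IsOpenCover (U n)) →
    ∃ F : ℕ → Finset X, ∀ x : X, ∀ᶠ n in atTop, x ∈ star (↑(F n)) (U n)

def SelStronglyStarHurewicz (X : Type u) [TopologicalSpace X] : Prop :=
  ∀ U : ℕ → Set (Set X), (∀ n, IsOpenCover (U n)) →
    ∀ D : ℕ → Set X, (∀ n, Dense (D n)) →
      ∃ F : ℕ → Finset X, (∀ n, ↑(F n) ⊆ D n) ∧
        ∀ x : X, ∀ᶠ n in atTop, x ∈ star (↑(F n)) (U n)

def StronglyStarRothberger (X : Type u) [TopologicalSpace X] : Prop :=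
  ∀ U : ℕ → Set (Set X), (∀ n, IsOpenCover (U n)) →
    ∃ x : ℕ → X, ⋃ n, star {x n} (U n) = univ

def SelStronglyStarRothberger (X : Type u) [TopologicalSpace X] : Prop :=
  ∀ U : ℕ → Set (Set X), (∀ n, IsOpenCover (U n)) →
    ∀ D : ℕ → Set X, (∀ n, Dense (D n)) →
      ∃ d : ℕ → X, (∀ n, d n ∈ D n) ∧ ⋃ n, star {d n} (U n) = univ

def DiscreteIn {X : Type u} [TopologicalSpace X] (C : Set X) : Prop :=
  ∀ x ∈ C, ∃ O : Set X, IsOpen O ∧ O ∩ C = {x}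

def CountableExtent (X : Type u) [TopologicalSpace X] : Prop :=
  ∀ C : Set X, IsClosed C → DiscreteIn C → C.Countable

def SelSScdOGamma (X : Type u) [TopologicalSpace X] : Prop :=
  ∀ U : ℕ → Set (Set X), (∀ n, IsOpenCover (U n)) →
    ∀ D : ℕ → Set X, (∀ n, Dense (D n)) →
      ∃ C : ℕ → Set X, (∀ n, C n ⊆ D n ∧ IsClosed (C n) ∧ DiscreteIn (C n)) ∧
        ∀ x : X, ∀ᶠ n in atTop, x ∈ star (C n) (U n)

def SelSScdOO (X : Type u) [TopologicalSpace X] : Prop :=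
  ∀ U : ℕ → Set (Set X), (∀ n, IsOpenCover (U n)) →
    ∀ D : ℕ → Set X, (∀ n, Dense (D n)) →
      ∃ C : ℕ → Set X, (∀ n, C n ⊆ D n ∧ IsClosed (C n) ∧ DiscreteIn (C n)) ∧
        ⋃ n, star (C n) (U n) = univ

def StarSigmaK (X : Type u) [TopologicalSpace X] (K : Set (Set X)) : Prop :=
  ∀ U : Set (Set X), IsOpenCover U →
    ∃ E : ℕ → Set X, (∀ m, E m ∈ K) ∧ star (⋃ m, E m) U = univ

def AbsStarSigmaK (X : Type u) [TopologicalSpace X] (K : Set (Set X)) : Prop :=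
  ∀ D : Set X, Dense D → ∀ U : Set (Set X), IsOpenCover U →
    ∃ E : ℕ → Set X, (∀ m, E m ∈ K ∧ E m ⊆ D) ∧ star (⋃ m, E m) U = univ

def AbsNbhdStarMenger (X : Type u) [TopologicalSpace X] : Prop :=
  ∀ U : ℕ → Set (Set X), (∀ n, IsOpenCover (U n)) → ∀ D : Set X, Dense D →
    ∃ F : ℕ → Finset X, (∀ n, ↑(F n) ⊆ D) ∧
      ∀ O : ℕ → Set X, (∀ n, IsOpen (O n) ∧ ↑(F n) ⊆ O n) →
        ⋃ n, star (O n) (U n) = univ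

def AbsNbhdStarHurewicz (X : Type u) [TopologicalSpace X] : Prop :=
  ∀ U : ℕ → Set (Set X), (∀ n, IsOpenCover (U n)) → ∀ D : Set X, Dense D →
    ∃ F : ℕ → Finset X, (∀ n, ↑(F n) ⊆ D) ∧
      ∀ O : ℕ → Set X, (∀ n, IsOpen (O n) ∧ ↑(F n) ⊆ O n) →
        ∀ x : X, ∀ᶠ n in atTop, x ∈ star (O n) (U n)


theorem stmt0 {X : Type u} [TopologicalSpace X]
    (hssl : StronglyStarLindelof X) (hcard : Cardinal.mk X < Cardinal.lift.{u} domNum) :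
    StronglyStarMenger X := by
  classical
  intro U hU
  by_cases hX : Nonempty X
  · -- choose countable sets
    choose C hCc hCstar using fun n => hssl (U n) (hU n)
    have hCne : ∀ n, (C n).Nonempty := by
      intro n
      obtain ⟨x⟩ := hX
      have hx : x ∈ star (C n) (U n) := (hCstar n).symm ▸ mem_univ x
      obtain ⟨u, hu, -⟩ := hx
      exact hu.2.imp fun c hc => hc.2
    choose e he using fun n => (hCc n).exists_eq_range (hCne n)
    have key : ∀ (x : X) (n : ℕ), ∃ k, ∃ u ∈ U n, e n k ∈ u ∧ x ∈ u := by
      intro x n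
      have hx : x ∈ star (C n) (U n) := (hCstar n).symm ▸ mem_univ x
      obtain ⟨u, ⟨huU, c, hcu, hcC⟩, hxu⟩ := hx
      rw [he n] at hcC
      obtain ⟨k, hk⟩ := hcC
      exact ⟨k, u, huU, hk ▸ hcu, hxu⟩
    choose f hf using key
    have hg : ∃ g : ℕ → ℕ, ∀ x, ∃ n, f x n ≤ g n := by
      by_contra hcon
      push_neg at hcon
      have hdom : ∀ f₀ : ℕ → ℕ, ∃ d ∈ Set.range f, ∀ᶠ n in atTop, f₀ n ≤ d n := by
        intro f₀
        obtain ⟨x, hx⟩ := hcon f₀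
        exact ⟨f x, mem_range_self x, Eventually.of_forall fun n => (hx n).le⟩
      have h1 : domNum ≤ Cardinal.mk (Set.range f) :=
csInf_le' ⟨Set.range f, rfl, hdom⟩
      have h2 : Cardinal.lift.{u} (Cardinal.mk (Set.range f)) ≤
          Cardinal.lift.{0} (Cardinal.mk X) := Cardinal.mk_range_le_lift
      rw [Cardinal.lift_uzero] at h2
      exact absurd ((Cardinal.lift_le.mpr h1).trans h2) (not_le_of_gt hcard)
    obtain ⟨g, hg⟩ := hg
    refine ⟨fun n => (Finset.range (g n + 1)).image (e n), ?_⟩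
    apply eq_univ_of_forall
    intro x
    obtain ⟨n, hn⟩ := hg x
    obtain ⟨u, huU, heu, hxu⟩ := hf x n
    refine mem_iUnion.mpr ⟨n, u, ⟨huU, e n (f x n), heu, ?_⟩, hxu⟩
    simp only [Finset.coe_image, Finset.coe_range]
    exact mem_image_of_mem _ (mem_Iio.mpr (Nat.lt_succ_of_le hn))
  · refine ⟨fun _ => ∅, eq_univ_of_forall fun x => absurd ⟨x⟩ hX⟩
end

section
/- If X is a strongly star-Lindelöf topological space of cardinality less than the bounding number 𝔟, then X is strongly star-Hurewicz. -/
open Set Filter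

variable {X : Type u}

lemma star_mono {X : Type u} {A B : Set X} (h : A ⊆ B) (U : Set (Set X)) :
    star A U ⊆ star B U := by
  intro x hx
  rcases hx with ⟨u, ⟨hu, c, hc1, hc2⟩, hxu⟩
  exact ⟨u, ⟨hu, c, hc1, h hc2⟩, hxu⟩

theorem stmt1 {X : Type u} [TopologicalSpace X]
    (hssl : StronglyStarLindelof X) (hcard : Cardinal.mk X < Cardinal.lift.{u} boundNum) :
    StronglyStarHurewicz X := by
  classical
  intro U hU
  by_cases hX : Nonempty X
  swap
  · exact ⟨fun _ => ∅, fun x => (hX ⟨x⟩).elim⟩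
  choose C hC hCstar using fun n => hssl (U n) (hU n)
  have hCne : ∀ n, (C n).Nonempty := by
    intro n
    rcases hX with ⟨x⟩
    by_contra h
    rw [Set.not_nonempty_iff_eq_empty] at h
    have hx : x ∈ star (C n) (U n) := (hCstar n).symm ▸ Set.mem_univ x
    rcases hx with ⟨u, ⟨hu, hne⟩, _⟩
    rw [h] at hne
    simp at hne
  choose e he using fun n => (hC n).exists_eq_range (hCne n)
  have key : ∀ (x : X) (n : ℕ), ∃ k, x ∈ star {e n k} (U n) := by
    intro x n
    have hx : x ∈ star (C n) (U n) := (hCstar n).symm ▸ Set.mem_univ x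
    rcases hx with ⟨u, ⟨hu, c, hc1, hc2⟩, hxu⟩
    rw [he n] at hc2
    rcases hc2 with ⟨k, hk⟩
    exact ⟨k, u, ⟨hu, c, hc1, hk ▸ rfl⟩, hxu⟩
  choose f hf using key
  have hBcard : Cardinal.mk (Set.range f) < boundNum := by
    have h1 : Cardinal.lift.{u} (Cardinal.mk (Set.range f)) ≤ Cardinal.lift.{0} (Cardinal.mk X) :=
      Cardinal.mk_range_le_lift
    have h2 : Cardinal.lift.{0} (Cardinal.mk X) < Cardinal.lift.{0} (Cardinal.lift.{u} boundNum) :=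
      Cardinal.lift_lt.mpr hcard
    rw [Cardinal.lift_lift] at h2
    exact Cardinal.lift_lt.mp (lt_of_le_of_lt h1 h2)
  have hbound : ∃ g : ℕ → ℕ, ∀ h ∈ Set.range f, ∀ᶠ n in atTop, h n ≤ g n := by
    by_contra hcon
    have hmem : Cardinal.mk (Set.range f) ∈ {c | ∃ B : Set (ℕ → ℕ), Cardinal.mk B = c ∧
        ¬ ∃ g : ℕ → ℕ, ∀ h ∈ B, ∀ᶠ n in atTop, h n ≤ g n} := ⟨Set.range f, rfl, hcon⟩
    have : boundNum ≤ Cardinal.mk (Set.range f) := csInf_le (OrderBot.bddBelow _) hmem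
    exact absurd hBcard (not_lt.mpr this)
  rcases hbound with ⟨g, hg⟩
  refine ⟨fun n => Finset.image (e n) (Finset.range (g n + 1)), fun x => ?_⟩
  filter_upwards [hg (f x) ⟨x, rfl⟩] with n hn
  refine star_mono ?_ (U n) (hf x n)
  intro y hy
  rcases hy with rfl
  exact Finset.mem_coe.mpr (Finset.mem_image.mpr ⟨f x n, Finset.mem_range.mpr (Nat.lt_succ_of_le hn), rfl⟩)
end

section
/- If X is a strongly star-Lindelöf topological space of cardinality less than cov(M) (the covering number of the meager ideal on the reals), then X is strongly star-Rothberger. -/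
open Set Filter

variable {X : Type u}

theorem stmt2 {X : Type u} [TopologicalSpace X] [Nonempty X]
    (hssl : StronglyStarLindelof X) (hcard : Cardinal.mk X < Cardinal.lift.{u} covMeager) :
    StronglyStarRothberger X := by
  intro U hU
  -- countable enumerated kernels for each cover
  have hC : ∀ n, ∃ c : ℕ → X, star (Set.range c) (U n) = univ := by
    intro n
    obtain ⟨C, hCc, hCs⟩ := hssl (U n) (hU n)
    have hne : C.Nonempty := by
      by_contra h
      rw [Set.not_nonempty_iff_eq_empty] at h
      subst h
      have hx : (Classical.arbitrary X) ∈ star (∅ : Set X) (U n) := by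
        rw [hCs]; trivial
      obtain ⟨u, hu, hxu⟩ := hx
      exact hu.2.elim (fun y hy => hy.2)
    obtain ⟨c, hc⟩ := hCc.exists_eq_range hne
    exact ⟨c, by rw [← hc]; exact hCs⟩
  choose c hc using hC
  -- for each x, n choose an index
  have key : ∀ x : X, ∀ n : ℕ, ∃ k : ℕ, x ∈ star {c n k} (U n) := by
    intro x n
    have hx : x ∈ star (Set.range (c n)) (U n) := by rw [hc n]; trivial
    obtain ⟨u, hu, hxu⟩ := hx
    obtain ⟨y, hyu, k, hk⟩ := hu.2
    exact ⟨k, u, ⟨hu.1, ⟨y, hyu, by simp [hk]⟩⟩, hxu⟩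
  choose f hf using key
  set F : Set (ℕ → ℕ) := Set.range f with hF
  have hmkF : Cardinal.mk F < covMeager := by
    have h1 : Cardinal.lift.{u} (Cardinal.mk F) ≤ Cardinal.lift.{0} (Cardinal.mk X) :=
      Cardinal.mk_range_le_lift
    rw [Cardinal.lift_uzero] at h1
    have h2 : Cardinal.lift.{u} (Cardinal.mk F) < Cardinal.lift.{u} covMeager :=
      lt_of_le_of_lt h1 hcard
    exact Cardinal.lift_lt.mp h2
  have hg : ∃ g : ℕ → ℕ, ∀ fx ∈ F, {n | g n = fx n}.Infinite := by
    by_contra h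
    have : covMeager ≤ Cardinal.mk F := csInf_le' ⟨F, rfl, h⟩
    exact absurd hmkF (not_lt.mpr this)
  obtain ⟨g, hg⟩ := hg
  refine ⟨fun n => c n (g n), ?_⟩
  ext x
  simp only [Set.mem_iUnion, Set.mem_univ, iff_true]
  have hinf : {n | g n = f x n}.Infinite := hg (f x) ⟨x, rfl⟩
  obtain ⟨n, hn⟩ := hinf.nonempty
  refine ⟨n, ?_⟩
  have := hf x n
  rwa [← hn] at this
end

section
/- Let X be a space of cardinality less than 𝔡 and let 𝒦 be a family of subsets of X closed under finite unions. If X is absolutely star-σ𝒦, then X satisfies selectively SS*_𝒦(O,O): for each sequence (Uₙ) of open covers and each sequence (Dₙ) of dense subsets of X there are Kₙ ∈ 𝒦 with Kₙ ⊆ Dₙ and {St(Kₙ,Uₙ) : n ∈ ω} an open cover of X. -/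
open Set Filter

variable {X : Type u}

lemma biUnion_mem {X : Type u} {K : Set (Set X)}
    (hK : ∀ A ∈ K, ∀ B ∈ K, A ∪ B ∈ K) {E : ℕ → Set X} (hE : ∀ m, E m ∈ K) :
    ∀ N, (⋃ m, ⋃ _ : m ≤ N, E m) ∈ K := by
  intro N
  induction N with
  | zero => simpa using hE 0
  | succ n ih =>
    rw [Set.biUnion_le_succ]
    exact hK _ ih _ (hE (n + 1))

theorem stmt4 {X : Type u} [TopologicalSpace X] (K : Set (Set X))
    (hK : ∀ A ∈ K, ∀ B ∈ K, A ∪ B ∈ K)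
    (hcard : Cardinal.mk X < Cardinal.lift.{u} domNum) (hstar : AbsStarSigmaK X K) :
    ∀ U : ℕ → Set (Set X), (∀ n, IsOpenCover (U n)) →
      ∀ D : ℕ → Set X, (∀ n, Dense (D n)) →
        ∃ Ks : ℕ → Set X, (∀ n, Ks n ∈ K ∧ Ks n ⊆ D n) ∧
          ⋃ n, star (Ks n) (U n) = univ := by
  intro U hU D hD
  choose E hE1 hE2 using fun n => hstar (D n) (hD n) (U n) (hU n)
  -- for each x and n, find m with x ∈ star (E n m) (U n)
  have hsel : ∀ x : X, ∀ n : ℕ, ∃ m : ℕ, x ∈ star (E n m) (U n) := by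
    intro x n
    have hx : x ∈ star (⋃ m, E n m) (U n) := by rw [hE2 n]; trivial
    obtain ⟨u, ⟨hu, y, hy1, hy2⟩, hxu⟩ := hx
    obtain ⟨_, ⟨m, rfl⟩, hym⟩ := hy2
    exact ⟨m, u, ⟨hu, y, hy1, hym⟩, hxu⟩
  choose f hf using hsel
  -- the family {f x : x ∈ X} is not dominating since #X < 𝔡
  have hsmall : Cardinal.mk (Set.range f) < domNum := by
    have h1 : Cardinal.lift.{u} (Cardinal.mk (Set.range f)) ≤
        Cardinal.lift.{0} (Cardinal.mk X) := Cardinal.mk_range_le_lift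
    rw [Cardinal.lift_id'] at h1
    exact Cardinal.lift_lt.mp (lt_of_le_of_lt h1 hcard)
  have hnd : ∃ g : ℕ → ℕ, ∀ x : X, ¬ ∀ᶠ n in atTop, g n ≤ f x n := by
    by_contra h
    push_neg at h
    have : domNum ≤ Cardinal.mk (Set.range f) := by
      apply csInf_le'
      refine ⟨Set.range f, rfl, fun h0 => ?_⟩
      obtain ⟨x, hx⟩ := h h0
      exact ⟨f x, ⟨x, rfl⟩, hx⟩
    exact absurd hsmall (not_lt.mpr this)
  obtain ⟨g, hg⟩ := hnd
  refine ⟨fun n => ⋃ m, ⋃ _ : m ≤ g n, E n m, fun n => ⟨?_, ?_⟩, ?_⟩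
  · exact biUnion_mem hK (fun m => (hE1 n m).1) (g n)
  · exact Set.iUnion₂_subset fun m _ => (hE1 n m).2
  · apply Set.eq_univ_of_forall
    intro x
    have := hg x
    rw [Filter.not_eventually] at this
    obtain ⟨n, hn⟩ := this.exists
    have hle : f x n ≤ g n := le_of_lt (not_le.mp hn)
    refine Set.mem_iUnion.mpr ⟨n, ?_⟩
    have hsub : E n (f x n) ⊆ ⋃ m, ⋃ _ : m ≤ g n, E n m := fun y hy =>
      Set.mem_iUnion₂.mpr ⟨f x n, hle, hy⟩
    exact star_mono hsub (U n) (hf x n)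
end

section
/- Let X be a space of cardinality less than 𝔟 and let 𝒦 be a family of subsets of X closed under finite unions. If X is star-σ𝒦, then X satisfies SS*_𝒦(O,Γ): for each sequence (Uₙ) of open covers there are Kₙ ∈ 𝒦 such that every x ∈ X lies in St(Kₙ,Uₙ) for all but finitely many n. -/
open Set Filter

variable {X : Type u}

def accU {X : Type u} (E : ℕ → Set X) : ℕ → Set X
  | 0 => E 0
  | (n+1) => accU E n ∪ E (n+1)

lemma accU_mem {X : Type u} {K : Set (Set X)}
    (hK : ∀ A ∈ K, ∀ B ∈ K, A ∪ B ∈ K) {E : ℕ → Set X} (hE : ∀ m, E m ∈ K) :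
    ∀ n, accU E n ∈ K := by
  intro n
  induction n with
  | zero => exact hE 0
  | succ n ih => exact hK _ ih _ (hE (n+1))

lemma subset_accU {X : Type u} (E : ℕ → Set X) {i n : ℕ} (h : i ≤ n) :
    E i ⊆ accU E n := by
  induction n with
  | zero => simp only [Nat.le_zero] at h; subst h; exact subset_rfl
  | succ n ih =>
    rcases Nat.lt_or_ge i (n+1) with h' | h'
    · exact (ih (Nat.lt_succ_iff.mp h')).trans (subset_union_left)
    · have : i = n + 1 := le_antisymm h h'
      subst this; exact subset_union_right

theorem stmt5 {X : Type u} [TopologicalSpace X] (K : Set (Set X))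
    (hK : ∀ A ∈ K, ∀ B ∈ K, A ∪ B ∈ K)
    (hcard : Cardinal.mk X < Cardinal.lift.{u} boundNum) (hstar : StarSigmaK X K) :
    ∀ U : ℕ → Set (Set X), (∀ n, IsOpenCover (U n)) →
      ∃ Ks : ℕ → Set X, (∀ n, Ks n ∈ K) ∧
        ∀ x : X, ∀ᶠ n in atTop, x ∈ star (Ks n) (U n) := by
  intro U hU
  choose E hEmem hEcov using fun n => hstar (U n) (hU n)
  -- for each x and n, pick m with x ∈ star (E n m) (U n)
  have hpick : ∀ (x : X) (n : ℕ), ∃ m, x ∈ star (E n m) (U n) := by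
    intro x n
    have hx : x ∈ star (⋃ m, E n m) (U n) := by rw [hEcov n]; trivial
    rcases hx with ⟨u, ⟨hu, y, hyu, hyE⟩, hxu⟩
    rcases mem_iUnion.mp hyE with ⟨m, hym⟩
    exact ⟨m, ⟨u, ⟨hu, y, hyu, hym⟩, hxu⟩⟩
  choose f hf using hpick
  -- the family {f x} is bounded since #X < 𝔟
  have hbdd : ∃ g : ℕ → ℕ, ∀ x : X, ∀ᶠ n in atTop, f x n ≤ g n := by
    by_contra hcon
    push_neg at hcon
    have hmem : Cardinal.mk (Set.range f) ∈ {c | ∃ B : Set (ℕ → ℕ),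
        Cardinal.mk B = c ∧ ¬ ∃ g : ℕ → ℕ, ∀ f ∈ B, ∀ᶠ n in atTop, f n ≤ g n} := by
      refine ⟨Set.range f, rfl, ?_⟩
      rintro ⟨g, hg⟩
      rcases hcon g with ⟨x, hx⟩
      exact hx ((hg (f x) ⟨x, rfl⟩).mono fun n hn => not_lt.mpr hn)
    have h1 : boundNum ≤ Cardinal.mk (Set.range f) := csInf_le' hmem
    have h2 : Cardinal.lift.{u} (Cardinal.mk (Set.range f)) ≤ Cardinal.mk X := by
      have := Cardinal.mk_range_le_lift (f := f)
      simpa using this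
    have h3 : Cardinal.lift.{u} boundNum ≤ Cardinal.mk X :=
      le_trans (Cardinal.lift_le.mpr h1) h2
    exact absurd hcard (not_lt.mpr h3)
  rcases hbdd with ⟨g, hg⟩
  refine ⟨fun n => accU (E n) (g n), fun n => accU_mem hK (hEmem n) (g n), ?_⟩
  intro x
  filter_upwards [hg x] with n hn
  exact star_mono (subset_accU (E n) hn) (U n) (hf x n)
end

section
/- Let X be a space of cardinality less than 𝔟 and let 𝒦 be a family of subsets of X closed under finite unions. If X is absolutely star-σ𝒦, then X satisfies selectively SS*_𝒦(O,Γ): for each sequence (Uₙ) of open covers and each sequence (Dₙ) of dense subsets there are Kₙ ∈ 𝒦 with Kₙ ⊆ Dₙ such that every x ∈ X lies in St(Kₙ,Uₙ) for all but finitely many n. -/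
open Set Filter

variable {X : Type u}

lemma bounded_of_lt_boundNum {X : Type u} (f : X → ℕ → ℕ)
    (hcard : Cardinal.mk X < Cardinal.lift.{u} boundNum) :
    ∃ g : ℕ → ℕ, ∀ x : X, ∀ᶠ n in atTop, f x n ≤ g n := by
  by_contra h
  push_neg at h
  have hmem : Cardinal.mk (Set.range f) ∈ {c | ∃ B : Set (ℕ → ℕ), Cardinal.mk B = c ∧
      ¬ ∃ g : ℕ → ℕ, ∀ f ∈ B, ∀ᶠ n in atTop, f n ≤ g n} := by
    refine ⟨Set.range f, rfl, ?_⟩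
    rintro ⟨g, hg⟩
    obtain ⟨x, hx⟩ := h g
    exact hx ((hg (f x) ⟨x, rfl⟩).mono fun n hn => not_lt.mpr hn)
  have h1 : boundNum ≤ Cardinal.mk (Set.range f) := csInf_le' hmem
  have h2 : Cardinal.lift.{u} boundNum ≤ Cardinal.lift.{u} (Cardinal.mk (Set.range f)) :=
    Cardinal.lift_le.mpr h1
  have h3 : Cardinal.lift.{u} (Cardinal.mk (Set.range f)) ≤ Cardinal.mk X := by
    simpa using Cardinal.mk_range_le_lift (f := f)
  exact absurd ((h2.trans h3).trans_lt hcard) (lt_irrefl _)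


theorem stmt6 {X : Type u} [TopologicalSpace X] (K : Set (Set X))
    (hK : ∀ A ∈ K, ∀ B ∈ K, A ∪ B ∈ K)
    (hcard : Cardinal.mk X < Cardinal.lift.{u} boundNum) (hstar : AbsStarSigmaK X K) :
    ∀ U : ℕ → Set (Set X), (∀ n, IsOpenCover (U n)) →
      ∀ D : ℕ → Set X, (∀ n, Dense (D n)) →
        ∃ Ks : ℕ → Set X, (∀ n, Ks n ∈ K ∧ Ks n ⊆ D n) ∧
          ∀ x : X, ∀ᶠ n in atTop, x ∈ star (Ks n) (U n) := by
  intro U hU D hD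
  choose E hE hEstar using fun n => hstar (D n) (hD n) (U n) (hU n)
  have hx : ∀ (x : X) (n : ℕ), ∃ m : ℕ, x ∈ star (E n m) (U n) := by
    intro x n
    have hxm : x ∈ star (⋃ m, E n m) (U n) := by rw [hEstar n]; trivial
    obtain ⟨u, ⟨huU, y, hyu, hyE⟩, hxu⟩ := hxm
    obtain ⟨m, hm⟩ := Set.mem_iUnion.mp hyE
    exact ⟨m, u, ⟨huU, y, hyu, hm⟩, hxu⟩
  choose f hf using hx
  obtain ⟨g, hg⟩ := bounded_of_lt_boundNum f hcard
  set P : ℕ → ℕ → Set X := fun n => Nat.rec (E n 0) (fun m acc => acc ∪ E n (m + 1)) with hP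
  have hPK : ∀ n m, P n m ∈ K ∧ P n m ⊆ D n := by
    intro n m
    induction m with
    | zero => exact ⟨(hE n 0).1, (hE n 0).2⟩
    | succ m ih =>
        exact ⟨hK _ ih.1 _ (hE n (m + 1)).1,
          Set.union_subset ih.2 (hE n (m + 1)).2⟩
  have hPsub : ∀ n m j, j ≤ m → E n j ⊆ P n m := by
    intro n m
    induction m with
    | zero => intro j hj; simp [Nat.le_zero.mp hj, hP]
    | succ m ih =>
        intro j hj
        rcases eq_or_lt_of_le hj with h | h
        · rw [h]; exact Set.subset_union_right
        · exact (ih j (Nat.lt_succ_iff.mp h)).trans Set.subset_union_left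
  refine ⟨fun n => P n (g n), fun n => hPK n (g n), fun x => ?_⟩
  filter_upwards [hg x] with n hn
  exact star_mono (hPsub n (g n) (f x n) hn) (U n) (hf x n)
end

section
/- If X is an absolutely strongly star-Lindelöf space of cardinality less than cov(M), then X is selectively strongly star-Rothberger: for each sequence (Uₙ) of open covers and each sequence (Dₙ) of dense subsets of X there are points dₙ ∈ Dₙ such that {St(dₙ,Uₙ) : n ∈ ω} is an open cover of X. -/
open Set Filter

variable {X : Type u}

theorem stmt7 {X : Type u} [TopologicalSpace X] [Nonempty X]
    (hassl : AbsStronglyStarLindelof X) (hcard : Cardinal.mk X < Cardinal.lift.{u} covMeager) :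
    SelStronglyStarRothberger X := by
  intro U hU D hD
  choose C hCsub hCc hCstar using fun n => hassl (U n) (hU n) (D n) (hD n)
  have hCne : ∀ n, (C n).Nonempty := by
    intro n
    obtain ⟨x⟩ := ‹Nonempty X›
    have hx : x ∈ star (C n) (U n) := by rw [hCstar n]; trivial
    obtain ⟨u, ⟨hu, c, _, hc⟩, _⟩ := hx
    exact ⟨c, hc⟩
  choose e he using fun n => (hCc n).exists_eq_range (hCne n)
  have hfx : ∀ x : X, ∀ n : ℕ, ∃ k, x ∈ star {e n k} (U n) := by
    intro x n
    have hx : x ∈ star (C n) (U n) := by rw [hCstar n]; trivial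
    obtain ⟨u, ⟨hu, c, hcu, hcC⟩, hxu⟩ := hx
    rw [he n] at hcC
    obtain ⟨k, hk⟩ := hcC
    exact ⟨k, ⟨u, ⟨hu, c, hcu, by simp [hk]⟩, hxu⟩⟩
  choose f hf using hfx
  have hFcard : Cardinal.mk (Set.range f) < covMeager := by
    have h1 : Cardinal.lift.{u} (Cardinal.mk (Set.range f)) ≤ Cardinal.lift.{0} (Cardinal.mk X) :=
      Cardinal.mk_range_le_lift
    rw [Cardinal.lift_id'] at h1
    have := lt_of_le_of_lt h1 hcard
    exact Cardinal.lift_lt.mp this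
  have hg : ∃ g : ℕ → ℕ, ∀ h ∈ Set.range f, {n | g n = h n}.Infinite := by
    by_contra hcon
    exact absurd hFcard (not_lt.2 (csInf_le' ⟨Set.range f, rfl, hcon⟩))
  obtain ⟨g, hg⟩ := hg
  refine ⟨fun n => e n (g n), fun n => ?_, ?_⟩
  · apply hCsub n
    rw [he n]; exact ⟨g n, rfl⟩
  · ext x
    simp only [mem_iUnion, mem_univ, iff_true]
    obtain ⟨n, hn⟩ := (hg (f x) ⟨x, rfl⟩).nonempty
    refine ⟨n, ?_⟩
    have : g n = f x n := hn
    rw [show ({e n (g n)} : Set X) = {e n (f x n)} by rw [this]]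
    exact hf x n
end

section
/- If X is an absolutely strongly star-Lindelöf space of cardinality less than 𝔡, then X is selectively strongly star-Menger: for each sequence (Uₙ) of open covers and each sequence (Dₙ) of dense subsets of X there are finite sets Fₙ ⊆ Dₙ with {St(Fₙ,Uₙ) : n ∈ ω} an open cover of X. -/
open Set Filter

variable {X : Type u}

theorem stmt8 {X : Type u} [TopologicalSpace X]
    (hassl : AbsStronglyStarLindelof X) (hcard : Cardinal.mk X < Cardinal.lift.{u} domNum) :
    SelStronglyStarMenger X := by
  classical
  intro U hU D hD
  by_cases hX : Nonempty X
  · choose C hCsub hCcount hCstar using fun n => hassl (U n) (hU n) (D n) (hD n)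
    have hCne : ∀ n, (C n).Nonempty := by
      intro n
      rcases hX with ⟨x⟩
      have hx : x ∈ star (C n) (U n) := by rw [hCstar n]; trivial
      rcases hx with ⟨u, ⟨hu, c, _, hcC⟩, _⟩
      exact ⟨c, hcC⟩
    choose e he using fun n => ((hCcount n).exists_eq_range (hCne n))
    have key : ∀ (x : X) (n : ℕ), ∃ k, ∃ u ∈ U n, x ∈ u ∧ e n k ∈ u := by
      intro x n
      have hx : x ∈ star (C n) (U n) := by rw [hCstar n]; trivial
      rcases hx with ⟨u, ⟨hu, c, hcu, hcC⟩, hxu⟩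
      rw [he n] at hcC
      rcases hcC with ⟨k, rfl⟩
      exact ⟨k, u, hu, hxu, hcu⟩
    choose f hf using key
    obtain ⟨g, hg⟩ : ∃ g : ℕ → ℕ, ∀ x : X, ∃ n, f x n ≤ g n := by
      by_contra hcon
      push_neg at hcon
      have hdom : ∀ h : ℕ → ℕ, ∃ F ∈ Set.range f, ∀ᶠ n in atTop, h n ≤ F n := by
        intro h
        obtain ⟨x, hx⟩ := hcon h
        exact ⟨f x, ⟨x, rfl⟩, Filter.Eventually.of_forall fun n => (hx n).le⟩
      have h1 : domNum ≤ Cardinal.mk (Set.range f) :=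
        csInf_le' ⟨Set.range f, rfl, hdom⟩
      have h2 : Cardinal.lift.{u} (Cardinal.mk (Set.range f)) ≤ Cardinal.mk X := by
        simpa using Cardinal.mk_range_le_lift (f := f)
      have := lt_of_le_of_lt (le_trans (Cardinal.lift_le.mpr h1) h2) hcard
      exact lt_irrefl _ this
    refine ⟨fun n => (Finset.range (g n + 1)).image (e n), ?_, ?_⟩
    · intro n a ha
      simp only [Finset.coe_image, Finset.coe_range] at ha
      rcases ha with ⟨k, _, rfl⟩
      apply hCsub n
      rw [he n]
      exact ⟨k, rfl⟩
    · apply Set.eq_univ_of_forall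
      intro x
      obtain ⟨n, hn⟩ := hg x
      obtain ⟨u, hu, hxu, heu⟩ := hf x n
      refine Set.mem_iUnion.mpr ⟨n, u, ⟨hu, e n (f x n), heu, ?_⟩, hxu⟩
      simp only [Finset.coe_image, Finset.coe_range]
      exact ⟨f x n, Nat.lt_succ_of_le hn, rfl⟩
  · refine ⟨fun _ => ∅, fun n => by simp, ?_⟩
    apply Set.eq_univ_of_forall
    intro x
    exact absurd ⟨x⟩ hX
end

section
/- If X is an absolutely strongly star-Lindelöf space of cardinality less than 𝔟, then X is selectively strongly star-Hurewicz: for each sequence (Uₙ) of open covers and each sequence (Dₙ) of dense subsets of X there are finite sets Fₙ ⊆ Dₙ such that every x ∈ X lies in St(Fₙ,Uₙ) for all but finitely many n. -/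
open Set Filter

variable {X : Type u}

theorem stmt9 {X : Type u} [TopologicalSpace X]
    (hassl : AbsStronglyStarLindelof X) (hcard : Cardinal.mk X < Cardinal.lift.{u} boundNum) :
    SelStronglyStarHurewicz X := by
  intro U hU D hD
  by_cases hX : Nonempty X
  · choose C hCD hCc hCs using fun n => hassl (U n) (hU n) (D n) (hD n)
    have hx0 := Classical.choice hX
    have hCne : ∀ n, (C n).Nonempty := by
      intro n
      have hx : hx0 ∈ star (C n) (U n) := by rw [hCs n]; trivial
      rcases hx with ⟨u, ⟨huU, y, _, hyC⟩, _⟩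
      exact ⟨y, hyC⟩
    choose e he using fun n => (hCc n).exists_eq_range (hCne n)
    have hstar : ∀ (x : X) (n : ℕ), ∃ k : ℕ, ∃ u ∈ U n, x ∈ u ∧ e n k ∈ u := by
      intro x n
      have hx : x ∈ star (C n) (U n) := by rw [hCs n]; trivial
      rcases hx with ⟨u, ⟨huU, y, hyu, hyC⟩, hxu⟩
      rw [he n] at hyC
      rcases hyC with ⟨k, rfl⟩
      exact ⟨k, u, huU, hxu, hyu⟩
    choose f hf using hstar
    have hbdd : ∃ g : ℕ → ℕ, ∀ x : X, ∀ᶠ n in atTop, f x n ≤ g n := by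
      by_contra hcon
      have hmem : boundNum ≤ Cardinal.mk (Set.range f) := by
        apply csInf_le'
        refine ⟨Set.range f, rfl, ?_⟩
        rintro ⟨g, hg⟩
        exact hcon ⟨g, fun x => hg (f x) ⟨x, rfl⟩⟩
      have hle : Cardinal.lift.{u} (Cardinal.mk (Set.range f)) ≤
          Cardinal.lift.{0} (Cardinal.mk X) := Cardinal.mk_range_le_lift
      have : Cardinal.lift.{u} boundNum ≤ Cardinal.mk X := by
        calc Cardinal.lift.{u} boundNum ≤ Cardinal.lift.{u} (Cardinal.mk (Set.range f)) :=
              Cardinal.lift_le.mpr hmem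
          _ ≤ Cardinal.lift.{0} (Cardinal.mk X) := hle
          _ = Cardinal.mk X := Cardinal.lift_id'.{0,u} _
      exact absurd hcard (not_lt.mpr this)
    obtain ⟨g, hg⟩ := hbdd
    classical
    refine ⟨fun n => (Finset.range (g n + 1)).image (e n), ?_, ?_⟩
    · intro n x hx
      simp only [Finset.coe_image, Set.mem_image, Finset.mem_coe, Finset.mem_range] at hx
      rcases hx with ⟨k, _, rfl⟩
      exact hCD n (by rw [he n]; exact ⟨k, rfl⟩)
    · intro x
      filter_upwards [hg x] with n hn
      obtain ⟨u, huU, hxu, heu⟩ := hf x n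
      refine ⟨u, ⟨huU, e n (f x n), heu, ?_⟩, hxu⟩
      simp only [Finset.coe_image, Set.mem_image, Finset.mem_coe, Finset.mem_range]
      exact ⟨f x n, Nat.lt_succ_of_le hn, rfl⟩
  · exact ⟨fun _ => ∅, fun n => by simp, fun x => absurd ⟨x⟩ hX⟩
end

section
/- If X is a space with countable extent of cardinality less than 𝔟 satisfying selSS*_cd(O,Γ), then X is selectively strongly star-Hurewicz. -/
open Set Filter

variable {X : Type u}

theorem stmt13 {X : Type u} [TopologicalSpace X]
    (hext : CountableExtent X) (hcard : Cardinal.mk X < Cardinal.lift.{u} boundNum)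
    (h : SelSScdOGamma X) : SelStronglyStarHurewicz X := by
  classical
  intro U hU D hD
  cases isEmpty_or_nonempty X with
  | inl hempty =>
      exact ⟨fun _ => ∅, fun n => by simp, fun x => (IsEmpty.false x).elim⟩
  | inr hne =>
  obtain ⟨C, hC, hcov⟩ := h U hU D hD
  have hcnt : ∀ n, (C n).Countable := fun n => hext (C n) (hC n).2.1 (hC n).2.2
  have hmono : ∀ (A B : Set X) (V : Set (Set X)), A ⊆ B → star A V ⊆ star B V := by
    intro A B V hAB x hx
    obtain ⟨u, ⟨huV, hne'⟩, hxu⟩ := hx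
    exact ⟨u, ⟨huV, hne'.mono (inter_subset_inter_right u hAB)⟩, hxu⟩
  -- enumeration of each C n
  have henum : ∀ n, ∃ e : ℕ → X, (C n).Nonempty → C n = Set.range e := by
    intro n
    by_cases hcn : (C n).Nonempty
    · obtain ⟨e, he⟩ := Set.Countable.exists_eq_range (hcnt n) hcn
      exact ⟨e, fun _ => he⟩
    · exact ⟨fun _ => Classical.arbitrary X, fun hc => absurd hc hcn⟩
  choose e he using henum
  -- for each x, the index function
  have hkey : ∀ (x : X) (n : ℕ), x ∈ star (C n) (U n) →
      ∃ k, x ∈ star {e n k} (U n) := by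
    intro x n hx
    obtain ⟨u, ⟨huV, c, hcu, hcC⟩, hxu⟩ := hx
    have hCn : (C n).Nonempty := ⟨c, hcC⟩
    rw [he n hCn] at hcC
    obtain ⟨k, hk⟩ := hcC
    exact ⟨k, u, ⟨huV, c, hcu, by simp [hk]⟩, hxu⟩
  let f : X → ℕ → ℕ := fun x n =>
    if hx : ∃ k, x ∈ star {e n k} (U n) then hx.choose else 0
  -- bound the family using |X| < 𝔟
  have hbd : ∃ g : ℕ → ℕ, ∀ b ∈ Set.range f, ∀ᶠ n in atTop, b n ≤ g n := by
    by_contra hcon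
    have hmem : boundNum ≤ Cardinal.mk (Set.range f) :=
      csInf_le' ⟨Set.range f, rfl, hcon⟩
    have h1 : Cardinal.lift.{u} (Cardinal.mk (Set.range f)) ≤ Cardinal.mk X := by
      simpa using (Cardinal.mk_range_le_lift (f := f))
    have h2 : Cardinal.lift.{u} (Cardinal.mk (Set.range f)) <
        Cardinal.lift.{u} boundNum := lt_of_le_of_lt h1 hcard
    exact absurd (Cardinal.lift_lt.mp h2) (not_lt.mpr hmem)
  obtain ⟨g, hg⟩ := hbd
  refine ⟨fun n => if hcn : (C n).Nonempty then
      (Finset.range (g n + 1)).image (e n) else ∅, ?_, ?_⟩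
  · intro n
    by_cases hcn : (C n).Nonempty
    · simp only [hcn, dif_pos]
      intro y hy
      simp only [Finset.coe_image, Finset.coe_range, Set.mem_image] at hy
      obtain ⟨k, _, rfl⟩ := hy
      have : e n k ∈ C n := by rw [he n hcn]; exact ⟨k, rfl⟩
      exact (hC n).1 this
    · simp [hcn]
  · intro x
    have h1 := hcov x
    have h2 := hg (f x) ⟨x, rfl⟩
    filter_upwards [h1, h2] with n hxn hfn
    have hCn : (C n).Nonempty := by
      obtain ⟨u, ⟨_, c, _, hcC⟩, _⟩ := hxn
      exact ⟨c, hcC⟩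
    have hex : ∃ k, x ∈ star {e n k} (U n) := hkey x n hxn
    have hxk : x ∈ star {e n (f x n)} (U n) := by
      have : f x n = hex.choose := dif_pos hex
      rw [this]; exact hex.choose_spec
    have hmem : e n (f x n) ∈ ((Finset.range (g n + 1)).image (e n) : Finset X) :=
      Finset.mem_image.mpr ⟨f x n, Finset.mem_range.mpr (Nat.lt_succ_of_le hfn), rfl⟩
    exact hmono {e n (f x n)} _ (U n)
      (by rw [dif_pos hCn]
          exact Set.singleton_subset_iff.mpr (Finset.mem_coe.mpr hmem)) hxk
end

section
/- If X is a space with countable extent of cardinality less than 𝔡 satisfying selSS*_cd(O,Γ), then X is selectively strongly star-Menger. -/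
open Set Filter

variable {X : Type u}

theorem stmt14 {X : Type u} [TopologicalSpace X]
    (hext : CountableExtent X) (hcard : Cardinal.mk X < Cardinal.lift.{u} domNum)
    (h : SelSScdOGamma X) : SelStronglyStarMenger X := by
  classical
  intro U hU D hD
  by_cases hX : Nonempty X
  swap
  · exact ⟨fun _ => ∅, fun n => by simp, by ext x; exact absurd ⟨x⟩ hX⟩
  obtain ⟨C, hC, hCst⟩ := h U hU D hD
  have hcnt : ∀ n, (C n).Countable := fun n => hext _ (hC n).2.1 (hC n).2.2
  have henum : ∀ n, ∃ e : ℕ → X, (∀ k, e k ∈ D n) ∧ ∀ c ∈ C n, ∃ k, e k = c := by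
    intro n
    rcases (C n).eq_empty_or_nonempty with he | hne
    · obtain ⟨d, hd⟩ := (hD n).nonempty
      exact ⟨fun _ => d, fun _ => hd, by simp [he]⟩
    · obtain ⟨e, he⟩ := Set.Countable.exists_eq_range (hcnt n) hne
      exact ⟨e, fun k => (hC n).1 (he ▸ Set.mem_range_self k),
        fun c hc => by rw [he] at hc; exact hc⟩
  choose e he1 he2 using henum
  set f : X → ℕ → ℕ := fun x n =>
    if hk : ∃ k, x ∈ star {e n k} (U n) then Nat.find hk + 1 else 0 with hf
  have hnd : ¬ ∀ g : ℕ → ℕ, ∃ y ∈ Set.range f, ∀ᶠ n in atTop, g n ≤ y n := by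
    intro hdom
    have h1 : domNum ≤ Cardinal.mk (Set.range f) :=
      csInf_le' ⟨Set.range f, rfl, hdom⟩
    have h2 : Cardinal.lift.{u} domNum ≤ Cardinal.lift.{u} (Cardinal.mk (Set.range f)) :=
      Cardinal.lift_le.mpr h1
    have h3 := Cardinal.mk_range_le_lift (f := f)
    rw [Cardinal.lift_uzero] at h3
    exact absurd (h2.trans h3) (not_le.mpr hcard)
  push_neg at hnd
  obtain ⟨g, hg⟩ := hnd
  refine ⟨fun n => (Finset.range (g n)).image (e n), ?_, ?_⟩
  · intro n x hx
    simp only [Finset.coe_image, Finset.coe_range, Set.mem_image] at hx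
    obtain ⟨k, -, rfl⟩ := hx
    exact he1 n k
  · ext x
    simp only [Set.mem_iUnion, Set.mem_univ, iff_true]
    obtain ⟨N, hN⟩ := Filter.eventually_atTop.mp (hCst x)
    have hfr : ∃ᶠ n in atTop, ¬ g n ≤ f x n :=
      (hg (f x) ⟨x, rfl⟩).mono fun n hn => not_le.mpr hn
    obtain ⟨n, hgn, hnN⟩ := (hfr.and_eventually (Filter.eventually_ge_atTop N)).exists
    have hxst := hN n hnN
    obtain ⟨u, ⟨huU, c, hcu, hcC⟩, hxu⟩ := hxst
    obtain ⟨k, hk⟩ := he2 n c hcC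
    have hex : ∃ k, x ∈ star {e n k} (U n) :=
      ⟨k, Set.mem_sUnion.mpr ⟨u, ⟨huU, c, hcu, by simp [hk]⟩, hxu⟩⟩
    have hfxn : f x n = Nat.find hex + 1 := by simp only [hf, dif_pos hex]
    have hlt : Nat.find hex < g n := by omega
    obtain ⟨u', ⟨hu'U, c', hc'u, hc'⟩, hxu'⟩ := Nat.find_spec hex
    refine ⟨n, Set.mem_sUnion.mpr ⟨u', ⟨hu'U, c', hc'u, ?_⟩, hxu'⟩⟩
    simp only [Set.mem_singleton_iff] at hc'
    subst hc'
    simp only [Finset.coe_image, Finset.coe_range, Set.mem_image]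
    exact ⟨Nat.find hex, hlt, rfl⟩
end

section
/- If X is a space with countable extent of cardinality less than cov(M) satisfying selSS*_cd(O,Γ), then X is selectively strongly star-Rothberger. -/
open Set Filter

variable {X : Type u}

theorem stmt16 {X : Type u} [TopologicalSpace X] [Nonempty X]
    (hext : CountableExtent X) (hcard : Cardinal.mk X < Cardinal.lift.{u} covMeager)
    (h : SelSScdOGamma X) : SelStronglyStarRothberger X := by
  intro U hU D hD
  obtain ⟨C, hC, hCst⟩ := h U hU D hD
  -- enumerate each C n inside D n
  have henum : ∀ n : ℕ, ∃ e : ℕ → X, (∀ k, e k ∈ D n) ∧ ∀ c ∈ C n, ∃ k, e k = c := by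
    intro n
    obtain ⟨d0, hd0⟩ := (hD n).nonempty
    rcases (C n).eq_empty_or_nonempty with hemp | hne
    · exact ⟨fun _ => d0, fun _ => hd0, by simp [hemp]⟩
    · have hcount : (C n).Countable := hext (C n) (hC n).2.1 (hC n).2.2
      obtain ⟨e, he⟩ := hcount.exists_eq_range hne
      refine ⟨e, fun k => (hC n).1 ?_, fun c hc => ?_⟩
      · rw [he]; exact mem_range_self k
      · rw [he] at hc; exact hc
  choose e heD heS using henum
  -- for each x, a choice function
  have hkey : ∀ x : X, ∃ N : ℕ, ∀ n ≥ N, ∃ k : ℕ, x ∈ star {e n k} (U n) := by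
    intro x
    obtain ⟨N, hN⟩ := (eventually_atTop.mp (hCst x))
    refine ⟨N, fun n hn => ?_⟩
    obtain ⟨u, ⟨huU, hune⟩, hxu⟩ := hN n hn
    obtain ⟨c, hcu, hcC⟩ := hune
    obtain ⟨k, hk⟩ := heS n c hcC
    exact ⟨k, u, ⟨huU, c, hcu, by simp [hk]⟩, hxu⟩
  choose N hN using hkey
  classical
  let f : X → ℕ → ℕ := fun x n =>
    if hx : ∃ k : ℕ, x ∈ star {e n k} (U n) then hx.choose else 0
  have hf : ∀ x : X, ∀ n ≥ N x, x ∈ star {e n (f x n)} (U n) := by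
    intro x n hn
    have hx := hN x n hn
    simp only [f, dif_pos hx]
    exact hx.choose_spec
  -- cov(M) argument
  set F : Set (ℕ → ℕ) := Set.range f with hF
  have hFcard : Cardinal.mk F < covMeager := by
    have h1 : Cardinal.lift.{u} (Cardinal.mk F) ≤ Cardinal.lift.{0} (Cardinal.mk X) :=
      Cardinal.mk_range_le_lift
    rw [Cardinal.lift_uzero] at h1
    exact Cardinal.lift_lt.mp (lt_of_le_of_lt h1 hcard)
  have hg : ∃ g : ℕ → ℕ, ∀ fx ∈ F, {n | g n = fx n}.Infinite := by
    by_contra hc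
    have : covMeager ≤ Cardinal.mk F := csInf_le' ⟨F, rfl, hc⟩
    exact absurd hFcard (not_lt.mpr this)
  obtain ⟨g, hg⟩ := hg
  refine ⟨fun n => e n (g n), fun n => heD n (g n), ?_⟩
  ext x
  simp only [mem_iUnion, mem_univ, iff_true]
  have hinf : {n | g n = f x n}.Infinite := hg (f x) ⟨x, rfl⟩
  obtain ⟨n, hn1, hn2⟩ := hinf.exists_gt (N x)
  have := hf x n (le_of_lt hn2)
  rw [← hn1] at this
  exact ⟨n, this⟩
end

section
/- Let X = Y ∪ Z with Y ∩ Z = ∅, where Z is a σ-compact subspace and Y is closed and discrete in X. If X is absolutely strongly star-Lindelöf and |Y| < 𝔡, then X is selectively strongly star-Menger. -/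
open Set Filter

variable {X : Type u}

lemma mem_star_of {X : Type u} {A : Set X} {U : Set (Set X)} {u : Set X} {x : X}
    (hu : u ∈ U) (hne : (u ∩ A).Nonempty) (hx : x ∈ u) : x ∈ star A U :=
  ⟨u, ⟨hu, hne⟩, hx⟩

lemma compact_star {X : Type u} [TopologicalSpace X] {K : Set X} (hK : IsCompact K)
    {U : Set (Set X)} (hU : IsOpenCover U) {D : Set X} (hD : Dense D) :
    ∃ F : Finset X, ↑F ⊆ D ∧ K ⊆ star (↑F) U := by
  classical
  have hcov : K ⊆ ⋃ u : U, (u : Set X) := by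
    rw [← Set.sUnion_eq_iUnion, hU.2]; exact subset_univ K
  obtain ⟨t, ht⟩ := hK.elim_finite_subcover (fun u : U => (u : Set X))
    (fun u => hU.1 u u.2) hcov
  set t' := t.filter (fun u : U => ((u : Set X)).Nonempty) with ht'
  have hpick : ∀ u ∈ t', ∃ x, x ∈ (u : Set X) ∧ x ∈ D := by
    intro u hu
    have hne : ((u : Set X)).Nonempty := (Finset.mem_filter.1 hu).2
    obtain ⟨x, hx1, hx2⟩ := hD.inter_open_nonempty _ (hU.1 u u.2) hne
    exact ⟨x, hx1, hx2⟩
  choose pick hpick1 hpick2 using hpick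
  refine ⟨t'.attach.image (fun u => pick u.1 u.2), ?_, ?_⟩
  · intro x hx
    simp only [Finset.coe_image, Set.mem_image, Finset.mem_coe, Finset.mem_attach] at hx
    obtain ⟨u, _, rfl⟩ := hx
    exact hpick2 _ _
  · intro x hx
    obtain ⟨u, hu, hxu⟩ := Set.mem_iUnion₂.1 (ht hx)
    have hu' : u ∈ t' := Finset.mem_filter.2 ⟨hu, ⟨x, hxu⟩⟩
    refine mem_star_of u.2 ⟨pick u hu', hpick1 u hu', ?_⟩ hxu
    simp only [Finset.coe_image, Set.mem_image, Finset.mem_coe]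
    exact ⟨⟨u, hu'⟩, Finset.mem_attach _ _, rfl⟩

lemma nondom {ι : Type u} (f : ι → ℕ → ℕ) (h : Cardinal.mk ι < Cardinal.lift.{u} domNum) :
    ∃ g : ℕ → ℕ, ∀ i, ∃ n, f i n ≤ g n := by
  by_contra hc
  push_neg at hc
  have hdom : Cardinal.mk (Set.range f) ∈ {c | ∃ D : Set (ℕ → ℕ), Cardinal.mk D = c ∧
      ∀ h : ℕ → ℕ, ∃ g ∈ D, ∀ᶠ n in atTop, h n ≤ g n} := by
    refine ⟨Set.range f, rfl, fun h0 => ?_⟩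
    obtain ⟨i, hi⟩ := hc h0
    exact ⟨f i, Set.mem_range_self i, Filter.Eventually.of_forall fun n => (hi n).le⟩
  have h1 : domNum ≤ Cardinal.mk (Set.range f) := csInf_le' hdom
  have h2 : Cardinal.lift.{u} (Cardinal.mk (Set.range f)) ≤ Cardinal.mk ι := by
    have := Cardinal.mk_range_le_lift (f := f)
    rwa [Cardinal.lift_uzero] at this
  exact absurd ((Cardinal.lift_le.2 h1).trans h2) (not_le.2 h)

theorem stmt18 {X : Type u} [TopologicalSpace X] (Y Z : Set X)
    (hunion : Y ∪ Z = univ) (hdisj : Y ∩ Z = ∅)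
    (hZ : ∃ Kc : ℕ → Set X, (∀ n, IsCompact (Kc n)) ∧ Z = ⋃ n, Kc n)
    (hYc : IsClosed Y) (hYd : DiscreteIn Y)
    (hassl : AbsStronglyStarLindelof X) (hcard : Cardinal.mk Y < Cardinal.lift.{u} domNum) :
    SelStronglyStarMenger X := by
  classical
  intro U hU D hD
  rcases isEmpty_or_nonempty X with hE | hne
  · refine ⟨fun _ => ∅, fun n => by simp, ?_⟩
    rw [Set.eq_univ_iff_forall]; exact fun x => (hE.false x).elim
  · obtain ⟨Kc, hKcomp, hKZ⟩ := hZ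
    choose A hA1 hA2 using fun m => compact_star (hKcomp m) (hU (2*m)) (hD (2*m))
    choose C hCsub hCc hCstar using fun n => hassl (U (2*n+1)) (hU _) (D (2*n+1)) (hD _)
    have hCne : ∀ n, (C n).Nonempty := by
      intro n
      obtain ⟨x⟩ := hne
      have hx : x ∈ star (C n) (U (2*n+1)) := (hCstar n).symm ▸ Set.mem_univ x
      obtain ⟨u, ⟨hu, hnu⟩, _⟩ := hx
      exact ⟨hnu.choose, hnu.choose_spec.2⟩
    choose c hc using fun n => Set.Countable.exists_eq_range (hCc n) (hCne n)
    have key : ∀ (y : ↥Y) (n : ℕ), ∃ k : ℕ, ∃ u ∈ U (2*n+1), c n k ∈ u ∧ (y : X) ∈ u := by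
      intro y n
      have hy : (y : X) ∈ star (C n) (U (2*n+1)) := (hCstar n).symm ▸ Set.mem_univ _
      obtain ⟨u, ⟨hu, hnu⟩, hyu⟩ := hy
      obtain ⟨z, hz1, hz2⟩ := hnu
      rw [hc n] at hz2
      obtain ⟨k, rfl⟩ := hz2
      exact ⟨k, u, hu, hz1, hyu⟩
    choose f hf using key
    obtain ⟨g, hg⟩ := nondom f hcard
    set B : ℕ → Finset X := fun n => (Finset.range (g n + 1)).image (c n) with hB
    refine ⟨fun n => if n % 2 = 0 then A (n / 2) else B ((n - 1) / 2), ?_, ?_⟩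
    · intro n
      by_cases h2 : n % 2 = 0
      · have h3 : 2 * (n / 2) = n := by omega
        have := hA1 (n / 2)
        rw [h3] at this
        simpa [if_pos h2] using this
      · have h3 : 2 * ((n - 1) / 2) + 1 = n := by omega
        have hsub : ↑(B ((n - 1) / 2)) ⊆ D n := by
          intro x hx
          simp only [hB, Finset.coe_image, Set.mem_image, Finset.mem_coe] at hx
          obtain ⟨j, _, rfl⟩ := hx
          have hm : c ((n - 1) / 2) j ∈ C ((n - 1) / 2) := by
            rw [hc]; exact Set.mem_range_self j
          have := hCsub ((n - 1) / 2) hm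
          rwa [h3] at this
        simpa [if_neg h2] using hsub
    · rw [Set.eq_univ_iff_forall]
      intro x
      have hx : x ∈ Y ∪ Z := hunion ▸ Set.mem_univ x
      rcases hx with hxY | hxZ
      · obtain ⟨n, hn⟩ := hg ⟨x, hxY⟩
        obtain ⟨u, hu, hcu, hyu⟩ := hf ⟨x, hxY⟩ n
        refine Set.mem_iUnion.2 ⟨2*n+1, ?_⟩
        have e1 : ¬ ((2*n+1) % 2 = 0) := by omega
        have e2 : (2*n+1-1)/2 = n := by omega
        simp only [if_neg e1, e2]
        refine mem_star_of hu ⟨c n (f ⟨x, hxY⟩ n), hcu, ?_⟩ hyu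
        simp only [hB, Finset.coe_image, Set.mem_image, Finset.mem_coe]
        exact ⟨f ⟨x, hxY⟩ n, Finset.mem_range.2 (by omega), rfl⟩
      · rw [hKZ] at hxZ
        obtain ⟨m, hm⟩ := Set.mem_iUnion.1 hxZ
        refine Set.mem_iUnion.2 ⟨2*m, ?_⟩
        have e1 : (2*m) % 2 = 0 := by omega
        have e2 : (2*m)/2 = m := by omega
        simp only [if_pos e1, e2]
        exact hA2 m hm
end
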